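/- The dyadic period function G satisfies the three-term functional equation −1/(1−z) − (1/(1−z)^2)·G(1/(1−z)) + 2·G(z+1) = G(z) for every z ∈ ℂ ∖ (0,∞) (for such z all three arguments z, z+1, 1/(1−z) lie in ℂ ∖ (1,∞)). -/

import Mathlib

open scoped Classical
open MeasureTheory
open scoped ENNReal

/-- Cumulative sums `a₀ + a₁ + ⋯ + a_k` of the regular continued fraction
expansion of `x` (`none` once the expansion has terminated). -/
noncomputable def cfSum (x : ℝ) : ℕ → Option ℝ
  | 0 => some (⌊x⌋ : ℝ)
  | (k + 1) => (cfSum x k).bind fun s =>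
      ((GenContFract.of x).partDens.get? k).map fun b => s + b

/-- The Minkowski question mark function in its version on `[0, ∞)`:
`F([a₀; a₁, a₂, …]) = 1 - 2^{-a₀} + 2^{-(a₀+a₁)} - 2^{-(a₀+a₁+a₂)} + ⋯`. -/
noncomputable def minkQ (x : ℝ) : ℝ :=
  1 + ∑' k : ℕ, (cfSum x k).elim 0 fun s => (-1 : ℝ) ^ (k + 1) * (2 : ℝ) ^ (-s)

/-- `μ` is the Lebesgue–Stieltjes measure `dF` of the Minkowski question mark
function: it is supported on `[0, ∞)` and its cumulative distribution function
is `F = minkQ` there. -/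
def IsMinkowskiMeasure (μ : Measure ℝ) : Prop :=
  μ (Set.Iio 0) = 0 ∧ ∀ x : ℝ, 0 ≤ x → μ (Set.Iic x) = ENNReal.ofReal (minkQ x)

/-- The moment `m_L = ∫₀^∞ (x/(x+1))^L dF(x)`. -/
noncomputable def mMom (μ : Measure ℝ) (L : ℕ) : ℝ :=
  ∫ x, (x / (x + 1)) ^ L ∂μ

/-- The moment `M_L = ∫₀^∞ x^L dF(x)`. -/
noncomputable def MMom (μ : Measure ℝ) (L : ℕ) : ℝ :=
  ∫ x, x ^ L ∂μ

/-- The cut plane `ℂ ∖ (0, ∞)`. -/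
def cutPlaneZero : Set ℂ := {z : ℂ | z.im ≠ 0 ∨ z.re ≤ 0}

/-- The dyadic period function
`G(z) = ∫₀^∞ (x/(x+1))/(1 − z·x/(x+1)) dF(x)`, holomorphic on `ℂ ∖ (1,∞)`,
with `G(z) = Σ_{L≥1} m_L z^{L−1}` for `|z| < 1`. -/
noncomputable def dyadicG (μ : Measure ℝ) (z : ℂ) : ℂ :=
  ∫ x, ((x : ℂ) / ((x : ℂ) + 1)) * (1 - z * ((x : ℂ) / ((x : ℂ) + 1)))⁻¹ ∂μ


noncomputable def mterm (x : ℝ) (k : ℕ) : ℝ :=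
  (cfSum x k).elim 0 fun s => (-1 : ℝ) ^ (k + 1) * (2 : ℝ) ^ (-s)

lemma minkQ_eq (x : ℝ) : minkQ x = 1 + ∑' k, mterm x k := rfl

lemma cfSum_zero (x : ℝ) : cfSum x 0 = some (⌊x⌋ : ℝ) := rfl
lemma cfSum_succ (x : ℝ) (k : ℕ) : cfSum x (k+1) = (cfSum x k).bind fun s =>
      ((GenContFract.of x).partDens.get? k).map fun b => s + b := rfl


namespace MQ
open GenContFract

lemma stream_one (v : ℝ) : IntFractPair.stream v 1 =
    if Int.fract v = 0 then none else some (IntFractPair.of (Int.fract v)⁻¹) := by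
  by_cases h : Int.fract v = 0
  · simp only [h, if_true]
    exact IntFractPair.stream_eq_none_of_fr_eq_zero (IntFractPair.stream_zero v) h
  · simp only [h, if_false]
    rw [IntFractPair.stream_succ h, IntFractPair.stream_zero]

lemma of_s_congr {v w : ℝ} (h : Int.fract v = Int.fract w) :
    (GenContFract.of v).s = (GenContFract.of w).s := by
  ext1 n
  cases n with
  | zero => rw [of_s_head_aux, of_s_head_aux, stream_one, stream_one, h]
  | succ n => rw [of_s_succ, of_s_succ, h]

lemma partDens_congr {v w : ℝ} (h : Int.fract v = Int.fract w) :
    (GenContFract.of v).partDens = (GenContFract.of w).partDens := by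
  unfold partDens; rw [of_s_congr h]

lemma pd_zero_of_fract_ne {x : ℝ} (h : Int.fract x ≠ 0) :
    (GenContFract.of x).partDens.get? 0 = some ((⌊(Int.fract x)⁻¹⌋ : ℤ) : ℝ) := by
  have h2 : (GenContFract.of x).s.get? 0 = some ⟨1, ((⌊(Int.fract x)⁻¹⌋ : ℤ) : ℝ)⟩ := of_s_head h
  unfold partDens
  rw [Stream'.Seq.map_get?, h2]; rfl

lemma pd_zero_of_fract_eq {x : ℝ} (h : Int.fract x = 0) :
    (GenContFract.of x).partDens.get? 0 = none := by
  unfold partDens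
  rw [Stream'.Seq.map_get?, of_s_head_aux, stream_one, if_pos h]; rfl

lemma pd_succ (x : ℝ) (n : ℕ) :
    (GenContFract.of x).partDens.get? (n+1) = (GenContFract.of (Int.fract x)⁻¹).partDens.get? n := by
  unfold partDens
  rw [Stream'.Seq.map_get?, Stream'.Seq.map_get?, of_s_succ]


lemma cfSum_succ_some {x : ℝ} {k : ℕ} {s' : ℝ} (h : cfSum x (k+1) = some s') :
    ∃ s b, cfSum x k = some s ∧ (GenContFract.of x).partDens.get? k = some b ∧
      s' = s + b ∧ 1 ≤ b := by
  rw [cfSum_succ] at h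
  rcases hs : cfSum x k with _ | s
  · rw [hs] at h; exact absurd h (by simp)
  · rw [hs] at h
    rcases hb : (GenContFract.of x).partDens.get? k with _ | b
    · rw [hb] at h; exact absurd h (by simp)
    · rw [hb] at h
      have h' : s + b = s' := by simpa using h
      exact ⟨s, b, rfl, rfl, h'.symm, of_one_le_get?_partDen hb⟩

lemma cfSum_none_succ {x : ℝ} {k : ℕ} (h : cfSum x k = none) : cfSum x (k+1) = none := by
  rw [cfSum_succ, h]; rfl

lemma cfSum_ge {x : ℝ} (hx : 0 ≤ x) : ∀ k s, cfSum x k = some s → (k : ℝ) ≤ s := by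
  intro k
  induction k with
  | zero => intro s hs
            rw [cfSum_zero] at hs
            simp only [Option.some.injEq] at hs
            subst hs
            exact_mod_cast Int.cast_nonneg_iff.mpr (Int.floor_nonneg.mpr hx)
  | succ k ih =>
    intro s' hs'
    obtain ⟨s, b, h1, _, h3, h4⟩ := cfSum_succ_some hs'
    have := ih s h1
    push_cast
    rw [h3]; linarith

lemma mterm_of_none {x : ℝ} {k : ℕ} (h : cfSum x k = none) : mterm x k = 0 := by
  unfold mterm; rw [h]; rfl

lemma mterm_of_some {x : ℝ} {k : ℕ} {s : ℝ} (h : cfSum x k = some s) :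
    mterm x k = (-1 : ℝ) ^ (k + 1) * (2 : ℝ) ^ (-s) := by
  unfold mterm; rw [h]; rfl

lemma abs_mterm_le {x : ℝ} (hx : 0 ≤ x) (k : ℕ) : |mterm x k| ≤ (2⁻¹ : ℝ) ^ k := by
  rcases hs : cfSum x k with _ | s
  · rw [mterm_of_none hs, abs_zero]; positivity
  · rw [mterm_of_some hs, abs_mul, abs_pow, abs_neg, abs_one, one_pow, one_mul,
      abs_of_nonneg (Real.rpow_nonneg (by norm_num) _)]
    have hks : (k : ℝ) ≤ s := cfSum_ge hx k s hs
    calc (2:ℝ) ^ (-s) ≤ (2:ℝ) ^ (-(k:ℝ)) := by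
          apply Real.rpow_le_rpow_left_iff (x := 2) (by norm_num) |>.mpr
          linarith
      _ = (2⁻¹ : ℝ) ^ k := by
          rw [Real.rpow_neg (by norm_num), Real.rpow_natCast, inv_pow]

lemma summable_mterm {x : ℝ} (hx : 0 ≤ x) : Summable (mterm x) := by
  apply Summable.of_abs
  apply Summable.of_nonneg_of_le (fun k => abs_nonneg _) (abs_mterm_le hx)
  exact summable_geometric_of_lt_one (by norm_num) (by norm_num)

lemma mterm_pair_nonneg {x : ℝ} (j : ℕ) :
    0 ≤ mterm x (2*j+1) + mterm x (2*j+2) := by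
  rcases h1 : cfSum x (2*j+1) with _ | s
  · rw [mterm_of_none h1, mterm_of_none (cfSum_none_succ h1)]; norm_num
  · have hsign : ((-1 : ℝ)) ^ (2*j+1+1) = 1 := by
      rw [show 2*j+1+1 = 2*(j+1) by ring, pow_mul]; norm_num
    rcases h2 : cfSum x (2*j+2) with _ | s'
    · rw [mterm_of_none h2, mterm_of_some h1, hsign, add_zero, one_mul]
      positivity
    · obtain ⟨s0, b, hs0, _, hsb, hb⟩ := cfSum_succ_some h2
      rw [hs0] at h1
      simp only [Option.some.injEq] at h1
      subst h1
      rw [mterm_of_some h2, mterm_of_some hs0, hsign]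
      have hsign2 : ((-1 : ℝ)) ^ (2*j+2+1) = -1 := by
        rw [show 2*j+2+1 = 2*(j+1)+1 by ring, pow_succ, pow_mul]; norm_num
      rw [hsign2, one_mul, neg_one_mul, ← sub_eq_add_neg, sub_nonneg]
      apply Real.rpow_le_rpow_left_iff (x := 2) (by norm_num) |>.mpr
      rw [hsb]; linarith

lemma minkQ_nonneg {x : ℝ} (hx : 0 ≤ x) : 0 ≤ minkQ x := by
  have hsum := summable_mterm hx
  have hshift : Summable (fun k => mterm x (k+1)) := by
    exact (summable_nat_add_iff 1).mpr hsum
  have heven : Summable (fun j => mterm x (2*j+1)) := by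
    exact hshift.comp_injective (i := fun j : ℕ => 2*j) (fun a b h => by simp only at h; omega)
  have hodd : Summable (fun j => mterm x (2*j+2)) := by
    have := hshift.comp_injective (i := fun j : ℕ => 2*j+1) (fun a b h => by simp only at h; omega)
    simpa [Nat.add_assoc, Function.comp_def] using this
  have h0 : mterm x 0 = -(2:ℝ) ^ (-(⌊x⌋:ℝ)) := by
    rw [mterm_of_some (cfSum_zero x)]; norm_num
  have hle1 : (2:ℝ) ^ (-(⌊x⌋:ℝ)) ≤ 1 := by
    apply Real.rpow_le_one_of_one_le_of_nonpos (by norm_num)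
    have : (0:ℝ) ≤ (⌊x⌋:ℝ) := by exact_mod_cast Int.cast_nonneg_iff.mpr (Int.floor_nonneg.mpr hx)
    linarith
  have htail : 0 ≤ ∑' k, mterm x (k+1) := by
    have hsplit : (∑' j, mterm x (2*j+1)) + (∑' j, mterm x (2*j+2)) = ∑' k, mterm x (k+1) := by
      have := tsum_even_add_odd (f := fun k => mterm x (k+1)) (by simpa using heven)
        (by simpa [Nat.add_assoc] using hodd)
      simpa [Nat.add_assoc] using this
    rw [← hsplit, ← Summable.tsum_add heven hodd]
    exact tsum_nonneg fun j => mterm_pair_nonneg j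
  rw [minkQ_eq, Summable.tsum_eq_zero_add hsum, h0]
  linarith


lemma rpow_neg_add_one (s : ℝ) : (2:ℝ) ^ (-(s+1)) = (2:ℝ) ^ (-s) / 2 := by
  rw [show -(s+1) = -s + (-1) by ring, Real.rpow_add (by norm_num), Real.rpow_neg_one]
  ring

lemma cfSum_add_one (x : ℝ) : ∀ k, cfSum (x+1) k = (cfSum x k).map (· + 1) := by
  have hfr : Int.fract (x+1) = Int.fract x := Int.fract_add_one x
  have hpd : ∀ k, (GenContFract.of (x+1)).partDens.get? k
      = (GenContFract.of x).partDens.get? k := fun k => by rw [partDens_congr hfr]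
  intro k
  induction k with
  | zero =>
    rw [cfSum_zero, cfSum_zero, Int.floor_add_one]
    push_cast
    simp [add_comm]
  | succ k ih =>
    rw [cfSum_succ, cfSum_succ, ih, hpd k]
    rcases cfSum x k with _ | s
    · rfl
    · rcases (GenContFract.of x).partDens.get? k with _ | b
      · rfl
      · simp only [Option.map_some, Option.bind_some]
        congr 1
        ring

lemma mterm_add_one (x : ℝ) (k : ℕ) : mterm (x+1) k = mterm x k / 2 := by
  rcases hs : cfSum x k with _ | s
  · have : cfSum (x+1) k = none := by rw [cfSum_add_one, hs]; rfl
    rw [mterm_of_none this, mterm_of_none hs]; norm_num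
  · have : cfSum (x+1) k = some (s+1) := by rw [cfSum_add_one, hs]; rfl
    rw [mterm_of_some this, mterm_of_some hs, rpow_neg_add_one]
    ring

lemma minkQ_add_one (x : ℝ) : minkQ (x+1) = (minkQ x + 1) / 2 := by
  rw [minkQ_eq, minkQ_eq]
  have : ∀ k, mterm (x+1) k = mterm x k / 2 := mterm_add_one x
  rw [tsum_congr this, tsum_div_const]
  ring

lemma cfSum_zero_succ : ∀ k, cfSum (0:ℝ) (k+1) = none := by
  intro k
  induction k with
  | zero =>
    rw [cfSum_succ, cfSum_zero, pd_zero_of_fract_eq (by norm_num)]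
    rfl
  | succ k ih => exact cfSum_none_succ ih

lemma minkQ_zero : minkQ 0 = 0 := by
  rw [minkQ_eq]
  have h : ∀ k, k ≠ 0 → mterm 0 k = 0 := by
    intro k hk
    rcases k with _ | k
    · exact absurd rfl hk
    · exact mterm_of_none (cfSum_zero_succ k)
  rw [tsum_eq_single 0 h, mterm_of_some (cfSum_zero 0)]
  norm_num

lemma minkQ_nat : ∀ n : ℕ, minkQ n = 1 - (2⁻¹ : ℝ) ^ n := by
  intro n
  induction n with
  | zero => simpa using minkQ_zero
  | succ n ih =>
    have : ((n+1 : ℕ) : ℝ) = (n:ℝ) + 1 := by push_cast; ring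
    rw [this, minkQ_add_one, ih, pow_succ]
    ring

lemma cfSum_map_step {x y : ℝ} {k m : ℕ}
    (hpd : (GenContFract.of y).partDens.get? m = (GenContFract.of x).partDens.get? k)
    (ih : cfSum y m = (cfSum x k).map (· + 1)) :
    cfSum y (m+1) = (cfSum x (k+1)).map (· + 1) := by
  rw [cfSum_succ, cfSum_succ, ih, hpd]
  rcases cfSum x k with _ | s
  · rfl
  · rcases (GenContFract.of x).partDens.get? k with _ | b
    · rfl
    · simp only [Option.map_some, Option.bind_some]
      congr 1
      ring

lemma mterm_shift {x y : ℝ} {j m : ℕ}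
    (h : cfSum y m = (cfSum x j).map (· + 1))
    (hsign : ((-1:ℝ)) ^ (m+1) = (-1) ^ (j+1)) :
    mterm y m = mterm x j / 2 := by
  rcases hs : cfSum x j with _ | s
  · have : cfSum y m = none := by rw [h, hs]; rfl
    rw [mterm_of_none this, mterm_of_none hs]; norm_num
  · have : cfSum y m = some (s+1) := by rw [h, hs]; rfl
    rw [mterm_of_some this, mterm_of_some hs, hsign, rpow_neg_add_one]
    ring

lemma minkQ_half_of_lt_one {x : ℝ} (hx0 : 0 < x) (hx1 : x < 1) :
    minkQ (x / (x+1)) = minkQ x / 2 := by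
  set y := x / (x+1) with hy
  have hx1' : (0:ℝ) < x + 1 := by linarith
  have hxne : x ≠ 0 := ne_of_gt hx0
  have hy0 : 0 < y := div_pos hx0 hx1'
  have hy1 : y < 1 := by rw [hy, div_lt_one hx1']; linarith
  have hfy : Int.fract y = y := Int.fract_eq_self.mpr ⟨le_of_lt hy0, hy1⟩
  have hfx : Int.fract x = x := Int.fract_eq_self.mpr ⟨le_of_lt hx0, hx1⟩
  have hyinv : y⁻¹ = x⁻¹ + 1 := by
    rw [hy]; field_simp; ring
  -- partial denominators
  have hpd0 : (GenContFract.of y).partDens.get? 0 = some (((⌊x⁻¹⌋ : ℤ) : ℝ) + 1) := by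
    rw [pd_zero_of_fract_ne (by rw [hfy]; exact ne_of_gt hy0), hfy, hyinv,
      Int.floor_add_one]
    push_cast
    ring_nf
  have hpdx0 : (GenContFract.of x).partDens.get? 0 = some ((⌊x⁻¹⌋ : ℤ) : ℝ) := by
    rw [pd_zero_of_fract_ne (by rw [hfx]; exact ne_of_gt hx0), hfx]
  have hpds : ∀ n, (GenContFract.of y).partDens.get? (n+1)
      = (GenContFract.of x).partDens.get? (n+1) := by
    intro n
    rw [pd_succ, pd_succ, hfy, hfx, partDens_congr (v := y⁻¹) (w := x⁻¹) ?_]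
    rw [hyinv, Int.fract_add_one]
  -- cfSum relation
  have hfl : (⌊y⌋ : ℤ) = 0 := by
    rw [Int.floor_eq_zero_iff]; exact ⟨le_of_lt hy0, hy1⟩
  have hflx : (⌊x⌋ : ℤ) = 0 := by
    rw [Int.floor_eq_zero_iff]; exact ⟨le_of_lt hx0, hx1⟩
  have hcf : ∀ k, cfSum y (k+1) = (cfSum x (k+1)).map (· + 1) := by
    intro k
    induction k with
    | zero =>
      rw [cfSum_succ, cfSum_succ, cfSum_zero, cfSum_zero, hfl, hflx, hpd0, hpdx0]
      simp only [Int.cast_zero, Option.bind_some, Option.map_some]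
      congr 1
      ring
    | succ k ih => exact cfSum_map_step (hpds k) ih
  -- mterm relation
  have hm0 : mterm y 0 = -1 := by
    rw [mterm_of_some (cfSum_zero y), hfl]
    norm_num
  have hmx0 : mterm x 0 = -1 := by
    rw [mterm_of_some (cfSum_zero x), hflx]
    norm_num
  have hms : ∀ k, mterm y (k+1) = mterm x (k+1) / 2 := fun k =>
    mterm_shift (hcf k) rfl
  -- sum up
  have hsy := summable_mterm (le_of_lt hy0)
  have hsx := summable_mterm (le_of_lt hx0)
  rw [minkQ_eq, minkQ_eq, Summable.tsum_eq_zero_add hsy, Summable.tsum_eq_zero_add hsx, hm0, hmx0,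
    tsum_congr hms, tsum_div_const]
  ring

lemma minkQ_half_of_one_lt {x : ℝ} (hx1 : 1 < x) :
    minkQ (x / (x+1)) = minkQ x / 2 := by
  set y := x / (x+1) with hy
  have hx0 : (0:ℝ) < x := lt_trans one_pos hx1
  have hx1' : (0:ℝ) < x + 1 := by linarith
  have hy0 : 0 < y := div_pos hx0 hx1'
  have hy1 : y < 1 := by rw [hy, div_lt_one hx1']; linarith
  have hfy : Int.fract y = y := Int.fract_eq_self.mpr ⟨le_of_lt hy0, hy1⟩
  have hyinv : y⁻¹ = 1 + x⁻¹ := by rw [hy]; field_simp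
  have hxinv0 : 0 < x⁻¹ := inv_pos.mpr hx0
  have hxinv1 : x⁻¹ < 1 := by rw [inv_lt_one_iff₀]; right; exact hx1
  have hfyinv : Int.fract y⁻¹ = x⁻¹ := by
    rw [hyinv, add_comm, Int.fract_add_one, Int.fract_eq_self.mpr ⟨le_of_lt hxinv0, hxinv1⟩]
  -- partial denominators
  have hpd0 : (GenContFract.of y).partDens.get? 0 = some (1:ℝ) := by
    rw [pd_zero_of_fract_ne (by rw [hfy]; exact ne_of_gt hy0), hfy]
    have : ⌊y⁻¹⌋ = 1 := by
      rw [Int.floor_eq_iff]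
      constructor
      · push_cast; rw [hyinv]; linarith
      · push_cast; rw [hyinv]; linarith
    rw [this]
    norm_num
  have hpd1 : (GenContFract.of y).partDens.get? 1 = some ((⌊x⌋ : ℤ) : ℝ) := by
    rw [pd_succ, hfy, pd_zero_of_fract_ne (by rw [hfyinv]; exact ne_of_gt hxinv0), hfyinv,
      inv_inv]
  have hpds : ∀ n, (GenContFract.of y).partDens.get? (n+2)
      = (GenContFract.of x).partDens.get? n := by
    intro n
    rw [show n+2 = (n+1)+1 by ring, pd_succ, hfy, pd_succ, hfyinv, inv_inv]
  have hfl : (⌊y⌋ : ℤ) = 0 := by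
    rw [Int.floor_eq_zero_iff]; exact ⟨le_of_lt hy0, hy1⟩
  -- cfSum relation
  have hcf1 : cfSum y 1 = some 1 := by
    rw [cfSum_succ, cfSum_zero, hfl, hpd0]
    simp
  have hcf : ∀ k, cfSum y (k+2) = (cfSum x k).map (· + 1) := by
    intro k
    induction k with
    | zero =>
      rw [show (0:ℕ)+2 = 1+1 by rfl, cfSum_succ, hcf1, hpd1, cfSum_zero]
      simp only [Option.bind_some, Option.map_some]
      congr 1
      ring
    | succ k ih => exact cfSum_map_step (hpds k) ih
  -- mterms
  have hm0 : mterm y 0 = -1 := by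
    rw [mterm_of_some (cfSum_zero y), hfl]; norm_num
  have hm1 : mterm y 1 = 1/2 := by
    rw [mterm_of_some hcf1]
    rw [show (2:ℝ)^(-(1:ℝ)) = 1/2 by rw [Real.rpow_neg_one]; norm_num]
    norm_num
  have hms : ∀ k, mterm y (k+2) = mterm x k / 2 := by
    intro k
    refine mterm_shift (hcf k) ?_
    rw [show k+2+1 = (k+1)+2 by ring, pow_add]
    norm_num
  -- sums
  have hsy := summable_mterm (le_of_lt hy0)
  have hsy1 : Summable (fun k => mterm y (k+1)) := (summable_nat_add_iff 1).mpr hsy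
  rw [minkQ_eq, minkQ_eq, Summable.tsum_eq_zero_add hsy, Summable.tsum_eq_zero_add hsy1, hm0, hm1]
  have : ∀ k, mterm y (k+1+1) = mterm x k / 2 := fun k => by
    rw [show k+1+1 = k+2 from rfl, hms k]
  rw [tsum_congr this, tsum_div_const]
  ring

lemma minkQ_one_half : minkQ (2⁻¹ : ℝ) = 4⁻¹ := by
  have hfl : (⌊(2⁻¹:ℝ)⌋ : ℤ) = 0 := by
    rw [Int.floor_eq_zero_iff]; norm_num
  have hf : Int.fract (2⁻¹:ℝ) = 2⁻¹ := Int.fract_eq_self.mpr (by norm_num)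
  have hpd0 : (GenContFract.of (2⁻¹:ℝ)).partDens.get? 0 = some ((2:ℤ) : ℝ) := by
    rw [pd_zero_of_fract_ne (by rw [hf]; norm_num), hf]
    norm_num
  have hpd1 : (GenContFract.of (2⁻¹:ℝ)).partDens.get? 1 = none := by
    rw [pd_succ, hf, inv_inv]
    apply pd_zero_of_fract_eq
    rw [show (2:ℝ) = ((2:ℤ):ℝ) by norm_num, Int.fract_intCast]
  have hcf1 : cfSum (2⁻¹:ℝ) 1 = some 2 := by
    rw [cfSum_succ, cfSum_zero, hfl, hpd0]
    simp
  have hcf2 : ∀ k, cfSum (2⁻¹:ℝ) (k+2) = none := by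
    intro k
    induction k with
    | zero =>
      rw [show (0:ℕ)+2 = 1+1 by rfl, cfSum_succ, hcf1, hpd1]
      rfl
    | succ k ih => exact cfSum_none_succ ih
  have hzero : ∀ k ∉ ({0, 1} : Finset ℕ), mterm (2⁻¹:ℝ) k = 0 := by
    intro k hk
    simp only [Finset.mem_insert, Finset.mem_singleton] at hk
    push_neg at hk
    obtain ⟨h0, h1⟩ := hk
    rcases k with _ | k
    · exact absurd rfl h0
    rcases k with _ | k
    · exact absurd rfl h1
    · exact mterm_of_none (hcf2 k)
  rw [minkQ_eq, tsum_eq_sum hzero]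
  rw [Finset.sum_insert (by norm_num), Finset.sum_singleton]
  rw [mterm_of_some (cfSum_zero (2⁻¹:ℝ)), hfl, mterm_of_some hcf1]
  rw [show ((0:ℤ):ℝ) = 0 by norm_num]
  rw [show (2:ℝ)^(-(0:ℝ)) = 1 by norm_num]
  rw [show (2:ℝ)^(-(2:ℝ)) = 4⁻¹ by
    rw [show -(2:ℝ) = (-2 : ℤ) by norm_num, Real.rpow_intCast]
    norm_num]
  norm_num

lemma minkQ_self_similar_small {x : ℝ} (hx : 0 ≤ x) :
    minkQ (x / (x+1)) = minkQ x / 2 := by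
  rcases eq_or_lt_of_le hx with h0 | h0
  · rw [← h0]
    norm_num [minkQ_zero]
  rcases lt_trichotomy x 1 with h1 | h1 | h1
  · exact minkQ_half_of_lt_one h0 h1
  · subst h1
    rw [show (1:ℝ)/(1+1) = 2⁻¹ by norm_num, minkQ_one_half]
    have h := minkQ_nat 1
    norm_num at h
    rw [h]
    norm_num
  · exact minkQ_half_of_one_lt h1

variable {μ : Measure ℝ}

lemma meas_inter_Ici (h0 : μ (Set.Iio 0) = 0) (S : Set ℝ) : μ S = μ (S ∩ Set.Ici 0) := by
  refine le_antisymm ?_ (measure_mono Set.inter_subset_left)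
  calc μ S ≤ μ ((S ∩ Set.Ici 0) ∪ Set.Iio 0) := by
        apply measure_mono
        intro x hx
        rcases le_or_gt 0 x with h | h
        · exact Or.inl ⟨hx, h⟩
        · exact Or.inr h
    _ ≤ μ (S ∩ Set.Ici 0) + μ (Set.Iio 0) := measure_union_le _ _
    _ = μ (S ∩ Set.Ici 0) := by rw [h0, add_zero]

lemma minkMeasure_univ (hμ : IsMinkowskiMeasure μ) : μ Set.univ = 1 := by
  obtain ⟨h0, hc⟩ := hμ
  have hmono : Monotone (fun n : ℕ => Set.Iic (n : ℝ)) := by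
    intro m n hmn
    exact Set.Iic_subset_Iic.mpr (by exact_mod_cast hmn)
  have hU : (⋃ n : ℕ, Set.Iic (n : ℝ)) = Set.univ := by
    ext x
    simp only [Set.mem_iUnion, Set.mem_Iic, Set.mem_univ, iff_true]
    obtain ⟨n, hn⟩ := exists_nat_ge x
    exact ⟨n, hn⟩
  have ht := tendsto_measure_iUnion_atTop (μ := μ) hmono
  rw [hU] at ht
  have ht2 : Filter.Tendsto (fun n : ℕ => μ (Set.Iic (n:ℝ))) Filter.atTop
      (nhds (1 : ℝ≥0∞)) := by
    have : ∀ n : ℕ, μ (Set.Iic (n:ℝ)) = ENNReal.ofReal (1 - (2⁻¹:ℝ)^n) := by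
      intro n
      rw [hc n (by positivity), minkQ_nat n]
    rw [show (1:ℝ≥0∞) = ENNReal.ofReal ((1:ℝ) - 0) by norm_num]
    simp_rw [this]
    apply (ENNReal.continuous_ofReal.tendsto _).comp
    exact (tendsto_const_nhds.sub (tendsto_pow_atTop_nhds_zero_of_lt_one (by norm_num)
      (by norm_num)))
  exact tendsto_nhds_unique ht ht2

lemma measurable_T0 : Measurable (fun x : ℝ => x / (x+1)) :=
  measurable_id.div ((measurable_id.add_const 1))

lemma minkMeasure_self_similar (hμ : IsMinkowskiMeasure μ) :
    μ = (2⁻¹ : ℝ≥0∞) • Measure.map (fun x : ℝ => x + 1) μ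
      + (2⁻¹ : ℝ≥0∞) • Measure.map (fun x : ℝ => x / (x+1)) μ := by
  obtain ⟨h0, hc⟩ := hμ
  have huniv := minkMeasure_univ ⟨h0, hc⟩
  haveI : IsProbabilityMeasure μ := ⟨huniv⟩
  apply Measure.ext_of_Iic
  intro a
  symm
  have hmap1 : Measure.map (fun x : ℝ => x + 1) μ (Set.Iic a) = μ (Set.Iic (a-1)) := by
    rw [Measure.map_apply (measurable_add_const 1) measurableSet_Iic]
    congr 1
    ext x
    simp [Set.mem_preimage, le_sub_iff_add_le]
  have hmap0 : Measure.map (fun x : ℝ => x / (x+1)) μ (Set.Iic a)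
      = μ ((fun x : ℝ => x / (x+1)) ⁻¹' Set.Iic a) := by
    rw [Measure.map_apply measurable_T0 measurableSet_Iic]
  rw [Measure.add_apply, Measure.smul_apply, Measure.smul_apply, smul_eq_mul, smul_eq_mul,
    hmap1, hmap0]
  have h2inv : (2⁻¹ : ℝ≥0∞) = ENNReal.ofReal (2⁻¹ : ℝ) := by
    rw [ENNReal.ofReal_inv_of_pos (by norm_num)]
    norm_num
  rcases lt_or_ge a 0 with ha | ha
  · -- a < 0 : everything is 0
    have hs1 : Set.Iic a ⊆ Set.Iio 0 := fun x hx => lt_of_le_of_lt hx ha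
    have hs2 : Set.Iic (a-1) ⊆ Set.Iio 0 := by
      intro x hx
      simp only [Set.mem_Iic] at hx
      simp only [Set.mem_Iio]
      linarith
    have e1 : μ (Set.Iic a) = 0 := measure_mono_null hs1 h0
    have e2 : μ (Set.Iic (a-1)) = 0 := measure_mono_null hs2 h0
    have e3 : μ ((fun x : ℝ => x / (x+1)) ⁻¹' Set.Iic a) = 0 := by
      rw [meas_inter_Ici h0]
      convert measure_empty (μ := μ)
      ext x
      simp only [Set.mem_inter_iff, Set.mem_preimage, Set.mem_Iic, Set.mem_Ici,
        Set.mem_empty_iff_false, iff_false, not_and]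
      intro hxa hx
      have : (0:ℝ) ≤ x / (x+1) := div_nonneg hx (by linarith)
      linarith
    rw [e1, e2, e3]
    simp
  rcases lt_or_ge a 1 with ha1 | ha1
  · -- 0 ≤ a < 1
    have hs2 : Set.Iic (a-1) ⊆ Set.Iio 0 := by
      intro x hx
      simp only [Set.mem_Iic] at hx
      simp only [Set.mem_Iio]
      linarith
    have e2 : μ (Set.Iic (a-1)) = 0 := measure_mono_null hs2 h0
    set c := a / (1-a) with hc'
    have hc0 : 0 ≤ c := div_nonneg ha (by linarith)
    have e3 : μ ((fun x : ℝ => x / (x+1)) ⁻¹' Set.Iic a) = μ (Set.Iic c) := by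
      rw [meas_inter_Ici h0, meas_inter_Ici h0 (Set.Iic c)]
      congr 1
      ext x
      simp only [Set.mem_inter_iff, Set.mem_preimage, Set.mem_Iic, Set.mem_Ici,
        and_congr_left_iff]
      intro hx
      rw [div_le_iff₀ (by linarith), hc', le_div_iff₀ (by linarith)]
      constructor <;> intro h <;> nlinarith
    rw [e2, e3, hc a ha, hc c hc0]
    have hkey : minkQ a = minkQ c / 2 := by
      have hfe := minkQ_self_similar_small hc0
      have hca : c * (1-a) = a := by
        have h1a : (1:ℝ) - a ≠ 0 := by linarith
        rw [hc', div_mul_cancel₀ _ h1a]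
      have hc1 : c + 1 ≠ 0 := by positivity
      have hcc : c / (c+1) = a := by
        rw [div_eq_iff hc1]
        linear_combination hca
      rwa [hcc] at hfe
    rw [hkey, h2inv, mul_zero, zero_add, ← ENNReal.ofReal_mul (by norm_num : (0:ℝ) ≤ 2⁻¹)]
    congr 1
    ring
  · -- 1 ≤ a
    have e3 : μ ((fun x : ℝ => x / (x+1)) ⁻¹' Set.Iic a) = 1 := by
      rw [meas_inter_Ici h0, ← huniv, meas_inter_Ici h0 Set.univ]
      have hset : ((fun x : ℝ => x / (x+1)) ⁻¹' Set.Iic a) ∩ Set.Ici 0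
          = Set.univ ∩ Set.Ici 0 := by
        ext x
        simp only [Set.mem_inter_iff, Set.mem_preimage, Set.mem_Iic, Set.mem_Ici,
          Set.univ_inter, Set.mem_univ, true_and]
        constructor
        · exact fun h => h.2
        · intro hx
          refine ⟨?_, hx⟩
          have : x / (x+1) < 1 := by
            rw [div_lt_one (by linarith)]
            linarith
          linarith
      rw [hset]
    rw [e3, hc a ha, hc (a-1) (by linarith)]
    have hkey : minkQ a = (minkQ (a-1) + 1) / 2 := by
      have := minkQ_add_one (a-1)
      rwa [sub_add_cancel] at this
    have hnn : 0 ≤ minkQ (a-1) := minkQ_nonneg (by linarith)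
    rw [hkey, h2inv, mul_one, ← ENNReal.ofReal_mul (by norm_num)]
    rw [← ENNReal.ofReal_add (by positivity) (by norm_num)]
    congr 1
    ring

/-- The integrand of `dyadicG`. -/
noncomputable def gg (w : ℂ) (x : ℝ) : ℂ :=
  ((x : ℂ) / ((x : ℂ) + 1)) * (1 - w * ((x : ℂ) / ((x : ℂ) + 1)))⁻¹

lemma measurable_gg (w : ℂ) : Measurable (gg w) := by
  have m1 : Measurable (fun x : ℝ => (x:ℂ)) := Complex.measurable_ofReal
  have m2 : Measurable (fun x : ℝ => (x:ℂ) / ((x:ℂ)+1)) := m1.div (m1.add_const 1)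
  exact m2.mul ((measurable_const.sub (measurable_const.mul m2)).inv)

lemma ae_nonneg (hμ : IsMinkowskiMeasure μ) : ∀ᵐ x ∂μ, 0 ≤ x := by
  rw [MeasureTheory.ae_iff]
  convert hμ.1 using 2
  ext x
  simp

lemma tail_measure (hμ : IsMinkowskiMeasure μ) (n : ℕ) :
    μ (Set.Ioi (n:ℝ)) = ENNReal.ofReal ((2⁻¹:ℝ)^n) := by
  have h1 : μ (Set.Iic (n:ℝ)) + μ (Set.Ioi (n:ℝ)) = 1 := by
    rw [← measure_union (Set.Iic_disjoint_Ioi le_rfl) measurableSet_Ioi, Set.Iic_union_Ioi,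
      minkMeasure_univ hμ]
  have h2 : μ (Set.Iic (n:ℝ)) = ENNReal.ofReal (1 - (2⁻¹:ℝ)^n) := by
    rw [hμ.2 n (by positivity), minkQ_nat n]
  have hne : ENNReal.ofReal (1 - (2⁻¹:ℝ)^n) ≠ ⊤ := ENNReal.ofReal_ne_top
  have hle : (2⁻¹:ℝ)^n ≤ 1 := by
    apply pow_le_one₀ <;> norm_num
  have hnn : (0:ℝ) ≤ 1 - (2⁻¹:ℝ)^n := by linarith
  apply (ENNReal.add_right_inj hne).mp
  rw [← h2, h1, h2, ← ENNReal.ofReal_add hnn (by positivity),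
    show (1 - (2⁻¹:ℝ)^n) + (2⁻¹:ℝ)^n = 1 by ring, ENNReal.ofReal_one]

lemma integrable_ofReal_id (hμ : IsMinkowskiMeasure μ) :
    Integrable (fun x : ℝ => (x:ℂ)) μ := by
  have hreal : Integrable (fun x : ℝ => x) μ := by
    refine ⟨measurable_id.aestronglyMeasurable, ?_⟩
    rw [MeasureTheory.HasFiniteIntegral]
    have hbound : ∀ᵐ x ∂μ, (‖x‖₊ : ℝ≥0∞)
        ≤ ∑' n : ℕ, (Set.Ioi (n:ℝ)).indicator (fun _ => (1:ℝ≥0∞)) x := by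
      filter_upwards [ae_nonneg hμ] with x hx
      rw [← enorm_eq_nnnorm, Real.enorm_eq_ofReal hx]
      set N := ⌈x⌉₊ with hN
      calc ENNReal.ofReal x ≤ (N : ℝ≥0∞) := by
            rw [← ENNReal.ofReal_natCast N]
            exact ENNReal.ofReal_le_ofReal (Nat.le_ceil x)
        _ = ∑ n ∈ Finset.range N, (Set.Ioi (n:ℝ)).indicator (fun _ => (1:ℝ≥0∞)) x := by
            have hone : ∀ n ∈ Finset.range N,
                (Set.Ioi (n:ℝ)).indicator (fun _ => (1:ℝ≥0∞)) x = 1 := by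
              intro n hn
              rw [Set.indicator_of_mem]
              rw [Set.mem_Ioi]
              exact Nat.lt_ceil.mp (Finset.mem_range.mp hn)
            rw [Finset.sum_congr rfl hone]
            simp
        _ ≤ _ := ENNReal.sum_le_tsum _
    calc ∫⁻ x, (‖x‖₊ : ℝ≥0∞) ∂μ
        ≤ ∫⁻ x, ∑' n : ℕ, (Set.Ioi (n:ℝ)).indicator (fun _ => (1:ℝ≥0∞)) x ∂μ :=
          lintegral_mono_ae hbound
      _ = ∑' n : ℕ, ∫⁻ x, (Set.Ioi (n:ℝ)).indicator (fun _ => (1:ℝ≥0∞)) x ∂μ :=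
          lintegral_tsum (fun n => (measurable_const.indicator measurableSet_Ioi).aemeasurable)
      _ = ∑' n : ℕ, μ (Set.Ioi (n:ℝ)) := by
          apply tsum_congr
          intro n
          rw [lintegral_indicator measurableSet_Ioi]
          simp [lintegral_const]
      _ = ∑' n : ℕ, (2⁻¹ : ℝ≥0∞)^n := by
          apply tsum_congr
          intro n
          rw [tail_measure hμ n, ENNReal.ofReal_pow (by norm_num), ENNReal.ofReal_inv_of_pos
            (by norm_num)]
          norm_num
      _ = (1 - 2⁻¹)⁻¹ := ENNReal.tsum_geometric 2⁻¹
      _ < ⊤ := by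
          rw [show (1:ℝ≥0∞) - 2⁻¹ = 2⁻¹ by
            rw [ENNReal.sub_eq_of_eq_add (by norm_num)]
            rw [ENNReal.inv_two_add_inv_two]]
          simp
  exact hreal.ofReal

lemma integrable_gg_bounded (hμ : IsMinkowskiMeasure μ) {w : ℂ}
    (hw : ∀ t : ℝ, t ∈ Set.Icc (0:ℝ) 1 → (1:ℂ) - w * t ≠ 0) :
    Integrable (gg w) μ := by
  haveI : IsProbabilityMeasure μ := ⟨minkMeasure_univ hμ⟩
  have hcont : ContinuousOn (fun t : ℝ => ((1:ℂ) - w * t)⁻¹) (Set.Icc 0 1) := by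
    apply ContinuousOn.inv₀
    · exact (continuous_const.sub (continuous_const.mul Complex.continuous_ofReal)).continuousOn
    · exact hw
  obtain ⟨C, hC⟩ := isCompact_Icc.exists_bound_of_continuousOn hcont
  apply MeasureTheory.Integrable.mono' (integrable_const C)
    ((measurable_gg w).aestronglyMeasurable)
  filter_upwards [ae_nonneg hμ] with x hx
  have hx1 : (0:ℝ) < x + 1 := by linarith
  set t : ℝ := x / (x+1) with ht
  have htmem : t ∈ Set.Icc (0:ℝ) 1 := by
    constructor
    · positivity
    · rw [ht, div_le_one hx1]; linarith
  have hcast : ((x:ℂ) / ((x:ℂ) + 1)) = ((t:ℝ) : ℂ) := by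
    rw [ht]
    push_cast
    rfl
  have : gg w x = (t:ℂ) * ((1:ℂ) - w * t)⁻¹ := by
    rw [gg, hcast]
  rw [this, norm_mul]
  have h1 : ‖((t:ℝ):ℂ)‖ ≤ 1 := by
    rw [Complex.norm_real, Real.norm_eq_abs, abs_of_nonneg htmem.1]
    exact htmem.2
  have h2 : ‖((1:ℂ) - w * t)⁻¹‖ ≤ C := hC t htmem
  have h2' : (0:ℝ) ≤ ‖((1:ℂ) - w * t)⁻¹‖ := norm_nonneg _
  calc ‖((t:ℝ):ℂ)‖ * ‖((1:ℂ) - w * t)⁻¹‖ ≤ 1 * C := by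
        apply mul_le_mul h1 h2 h2'
        linarith [le_trans h2' h2]
    _ = C := one_mul C

lemma integrable_gg_one (hμ : IsMinkowskiMeasure μ) : Integrable (gg 1) μ := by
  apply (integrable_ofReal_id hμ).congr
  filter_upwards [ae_nonneg hμ] with x hx
  have hx1 : ((x:ℂ) + 1) ≠ 0 := by
    intro h
    have := congrArg Complex.re h
    simp at this
    linarith
  rw [gg]
  field_simp
  ring

lemma dyadicG_eq (μ : Measure ℝ) (w : ℂ) : dyadicG μ w = ∫ x, gg w x ∂μ := rfl

lemma cp_ne {z : ℂ} (hz : z ∈ cutPlaneZero) {r : ℝ} (hr : 0 ≤ r) :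
    (1:ℂ) - z * (r:ℂ) ≠ 0 := by
  intro h
  have h1 : z * (r:ℂ) = 1 := by
    have := sub_eq_zero.mp h
    exact this.symm
  have him : z.im * r = 0 := by
    have := congrArg Complex.im h1
    simpa [Complex.mul_im] using this
  have hre : z.re * r = 1 := by
    have := congrArg Complex.re h1
    simpa [Complex.mul_re] using this
  have hrne : r ≠ 0 := by
    intro h0
    rw [h0] at hre
    norm_num at hre
  have hrpos : 0 < r := lt_of_le_of_ne hr (Ne.symm hrne)
  rcases hz with h | h
  · exact h (by rcases mul_eq_zero.mp him with h' | h'; exact h'; exact absurd h' hrne)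
  · nlinarith

lemma hypA {z : ℂ} (hz : z ∈ cutPlaneZero) :
    ∀ t : ℝ, t ∈ Set.Icc (0:ℝ) 1 → (1:ℂ) - z * t ≠ 0 :=
  fun t ht => cp_ne hz ht.1

lemma one_sub_ne {z : ℂ} (hz : z ∈ cutPlaneZero) : (1:ℂ) - z ≠ 0 := by
  have := cp_ne hz (r := 1) (by norm_num)
  simpa using this

lemma hypB {z : ℂ} (hz : z ∈ cutPlaneZero) (hz0 : z ≠ 0) :
    ∀ t : ℝ, t ∈ Set.Icc (0:ℝ) 1 → (1:ℂ) - (1-z)⁻¹ * t ≠ 0 := by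
  intro t ht h
  have h1z := one_sub_ne hz
  have h1 : (1-z)⁻¹ * (t:ℂ) = 1 := (sub_eq_zero.mp h).symm
  have ht1 : (t:ℂ) = 1 - z := by
    field_simp at h1
    linear_combination h1
  have him : z.im = 0 := by
    have := congrArg Complex.im ht1
    simpa using this.symm
  have hre : z.re = 1 - t := by
    have := congrArg Complex.re ht1
    simp at this
    linarith
  rcases hz with h' | h'
  · exact h' him
  · -- z.re ≤ 0 and z.re = 1 - t with t ≤ 1 forces t = 1, z = 0
    have ht1' : t = 1 := by
      have := ht.2
      rw [hre] at h'
      linarith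
    apply hz0
    apply Complex.ext
    · rw [hre, ht1']; norm_num
    · simpa using him

lemma hypC {z : ℂ} (hz : z ∈ cutPlaneZero) (hz0 : z ≠ 0) :
    ∀ t : ℝ, t ∈ Set.Icc (0:ℝ) 1 → (1:ℂ) - (z+1) * t ≠ 0 := by
  intro t ht h
  have h1 : (z+1) * (t:ℂ) = 1 := (sub_eq_zero.mp h).symm
  have htne : (t:ℂ) ≠ 0 := by
    intro h0
    rw [h0, mul_zero] at h1
    norm_num at h1
  have htr : t ≠ 0 := by exact_mod_cast fun h' => htne (by exact_mod_cast h')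
  have htpos : 0 < t := lt_of_le_of_ne ht.1 (Ne.symm htr)
  have him : z.im * t = 0 := by
    have := congrArg Complex.im h1
    simpa [Complex.add_im, Complex.mul_im] using this
  have him' : z.im = 0 := by
    rcases mul_eq_zero.mp him with h' | h'
    · exact h'
    · exact absurd h' htr
  have hre : (z.re + 1) * t = 1 := by
    have := congrArg Complex.re h1
    simpa [Complex.mul_re, him'] using this
  rcases hz with h' | h'
  · exact h' him'
  · -- z.re ≤ 0 : (z.re+1) t = 1 with t ≤ 1 → z.re ≥ 0 → z.re = 0 → t = 1 → z = 0
    have hzre : z.re = 0 := by nlinarith [ht.2]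
    apply hz0
    apply Complex.ext
    · exact hzre
    · exact him'

lemma gg_eq {x : ℝ} (hx : 0 ≤ x) (w : ℂ) :
    gg w x = (x:ℂ) * (((x:ℂ) + 1) - w * (x:ℂ))⁻¹ := by
  have hX1 : ((x:ℂ) + 1) ≠ 0 := by
    intro h
    have := congrArg Complex.re h
    simp at this
    linarith
  have key : (1:ℂ) - w * ((x:ℂ) / ((x:ℂ)+1)) = (((x:ℂ)+1) - w * (x:ℂ)) / ((x:ℂ)+1) := by
    field_simp
  rw [gg, key]
  rcases eq_or_ne (((x:ℂ) + 1) - w * (x:ℂ)) 0 with hD | hD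
  · rw [hD]
    simp
  · field_simp

lemma P1 {z : ℂ} (hz : z ∈ cutPlaneZero) {x : ℝ} (hx : 0 ≤ x) :
    gg (z+1) (x / (x+1)) = gg z x := by
  have hx1 : (0:ℝ) < x + 1 := by linarith
  have hu : 0 ≤ x / (x+1) := div_nonneg hx (le_of_lt hx1)
  rw [gg_eq hu, gg_eq hx]
  have hX1 : ((x:ℂ) + 1) ≠ 0 := by
    intro h
    have := congrArg Complex.re h
    simp at this
    linarith
  have hcast : ((x / (x+1) : ℝ) : ℂ) = (x:ℂ) / ((x:ℂ)+1) := by push_cast; rfl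
  have key2 : (1:ℂ) - z * ((x:ℂ) / ((x:ℂ)+1)) = (((x:ℂ)+1) - z * (x:ℂ)) / ((x:ℂ)+1) := by
    field_simp
  have hd0 : (1:ℂ) - z * ((x:ℂ)/((x:ℂ)+1)) ≠ 0 := by
    rw [← hcast]
    exact cp_ne hz hu
  have hd1 : (((x:ℂ)+1) - z * (x:ℂ)) ≠ 0 := by
    intro hD
    apply hd0
    rw [key2, hD, zero_div]
  have hA : ((x / (x+1) : ℝ) : ℂ) + 1 - (z+1) * ((x / (x+1) : ℝ) : ℂ)
      = (((x:ℂ)+1) - z * (x:ℂ)) / ((x:ℂ)+1) := by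
    rw [hcast]
    field_simp
    ring
  rw [hA, hcast]
  field_simp

lemma P2 {z : ℂ} (hz : z ∈ cutPlaneZero) {x : ℝ} (hx : 0 ≤ x) :
    gg (z+1) (x + 1) = (1-z)⁻¹ + (1-z)⁻¹ ^ 2 * gg ((1-z)⁻¹) x := by
  have h1z := one_sub_ne hz
  rw [gg_eq (by linarith : (0:ℝ) ≤ x + 1), gg_eq hx]
  have hcast : ((x + 1 : ℝ) : ℂ) = (x:ℂ) + 1 := by push_cast; ring
  rw [hcast]
  have hE : (1:ℂ) - z - z * (x:ℂ) ≠ 0 := by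
    have h' := cp_ne hz (show (0:ℝ) ≤ x + 1 by linarith)
    intro h
    apply h'
    push_cast
    linear_combination h
  have e1 : ((x:ℂ)+1) + 1 - (z+1) * ((x:ℂ)+1) = (1:ℂ) - z - z * (x:ℂ) := by ring
  have e2 : ((x:ℂ)+1) - (1-z)⁻¹ * (x:ℂ) = ((1:ℂ) - z - z * (x:ℂ)) / (1-z) := by
    field_simp
    ring
  rw [e1, e2]
  have hE2 : ((1:ℂ) - z - z * (x:ℂ)) / (1-z) ≠ 0 := div_ne_zero hE h1z
  have hE' : (1:ℂ) - (x:ℂ) * z - z ≠ 0 := by intro h; apply hE; linear_combination h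
  field_simp
  linear_combination (inv_mul_cancel₀ hE')


end MQ

open MQ

/-- The three-term functional equation of the dyadic period function:
`−1/(1−z) − (1/(1−z)²)·G(1/(1−z)) + 2·G(z+1) = G(z)` for `z ∈ ℂ ∖ (0,∞)`. -/
theorem dyadicG_three_term_equation (μ : Measure ℝ) (hμ : IsMinkowskiMeasure μ)
    (z : ℂ) (hz : z ∈ cutPlaneZero) :
    -(1 - z)⁻¹ - (1 - z)⁻¹ ^ 2 * dyadicG μ (1 - z)⁻¹ + 2 * dyadicG μ (z + 1) =
      dyadicG μ z := by
  haveI : IsProbabilityMeasure μ := ⟨minkMeasure_univ hμ⟩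
  have hae := ae_nonneg hμ
  -- integrability
  have hint_z : Integrable (gg z) μ := integrable_gg_bounded hμ (hypA hz)
  have hint_w : Integrable (gg ((1-z)⁻¹)) μ := by
    rcases eq_or_ne z 0 with h0 | h0
    · subst h0
      simpa using integrable_gg_one hμ
    · exact integrable_gg_bounded hμ (hypB hz h0)
  -- a.e. identities
  have haeP1 : (fun x => gg (z+1) (x / (x+1))) =ᵐ[μ] gg z := by
    filter_upwards [hae] with x hx using P1 hz hx
  have haeP2 : (fun x => gg (z+1) (x + 1))
      =ᵐ[μ] (fun x => (1-z)⁻¹ + (1-z)⁻¹ ^ 2 * gg ((1-z)⁻¹) x) := by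
    filter_upwards [hae] with x hx using P2 hz hx
  have hint_comp0 : Integrable (fun x => gg (z+1) (x / (x+1))) μ :=
    hint_z.congr haeP1.symm
  have hint_comp1 : Integrable (fun x => gg (z+1) (x + 1)) μ := by
    apply Integrable.congr _ haeP2.symm
    exact (integrable_const _).add (hint_w.const_mul _)
  -- map-measure integrability
  have hmeas1 : AEMeasurable (fun x : ℝ => x + 1) μ := (measurable_add_const 1).aemeasurable
  have hmeas0 : AEMeasurable (fun x : ℝ => x / (x+1)) μ := measurable_T0.aemeasurable
  have hsm1 : AEStronglyMeasurable (gg (z+1)) (Measure.map (fun x : ℝ => x + 1) μ) :=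
    (measurable_gg _).aestronglyMeasurable
  have hsm0 : AEStronglyMeasurable (gg (z+1)) (Measure.map (fun x : ℝ => x / (x+1)) μ) :=
    (measurable_gg _).aestronglyMeasurable
  have hi1 : Integrable (gg (z+1)) (Measure.map (fun x : ℝ => x + 1) μ) :=
    (integrable_map_measure hsm1 hmeas1).mpr hint_comp1
  have hi0 : Integrable (gg (z+1)) (Measure.map (fun x : ℝ => x / (x+1)) μ) :=
    (integrable_map_measure hsm0 hmeas0).mpr hint_comp0
  -- key decomposition
  have key : dyadicG μ (z+1)
      = (2⁻¹:ℝ) • (∫ x, gg (z+1) (x+1) ∂μ) + (2⁻¹:ℝ) • (∫ x, gg (z+1) (x/(x+1)) ∂μ) := by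
    rw [dyadicG_eq]
    conv_lhs => rw [minkMeasure_self_similar hμ]
    rw [integral_add_measure (hi1.smul_measure (by norm_num)) (hi0.smul_measure (by norm_num)),
      integral_smul_measure, integral_smul_measure,
      integral_map hmeas1 hsm1, integral_map hmeas0 hsm0]
    norm_num
  -- evaluate the two integrals
  have e2 : ∫ x, gg (z+1) (x/(x+1)) ∂μ = dyadicG μ z := by
    rw [integral_congr_ae haeP1, dyadicG_eq]
  have e1 : ∫ x, gg (z+1) (x+1) ∂μ
      = (1-z)⁻¹ + (1-z)⁻¹ ^ 2 * dyadicG μ ((1-z)⁻¹) := by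
    rw [integral_congr_ae haeP2, integral_add (integrable_const _) (hint_w.const_mul _),
      integral_const, MeasureTheory.integral_const_mul, dyadicG_eq]
    simp
  rw [key, e1, e2]
  have : ((2⁻¹:ℝ) : ℂ) = 2⁻¹ := by norm_num
  rw [Complex.real_smul, Complex.real_smul, this]
  ring
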